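/- The quantum determinant d ∈ A_{α,β}(n) is group-like: Δ(d) = d ⊗ d and ε(d) = 1. -/

import Mathlib

noncomputable section
open scoped TensorProduct

variable (k : Type) [Field k]

/-- The two-parameter quantum matrix relations on the free algebra on generators
`x (i,j)`, `1 ≤ i,j ≤ n` (here indexed by `Fin n`). -/
inductive QRel (n : ℕ) (α β : k) :
    FreeAlgebra k (Fin n × Fin n) → FreeAlgebra k (Fin n × Fin n) → Prop
  | row (i : Fin n) {r s : Fin n} (h : r < s) :
      QRel n α β (FreeAlgebra.ι k (i, s) * FreeAlgebra.ι k (i, r))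
        (α • (FreeAlgebra.ι k (i, r) * FreeAlgebra.ι k (i, s)))
  | col {i j : Fin n} (r : Fin n) (h : i < j) :
      QRel n α β (FreeAlgebra.ι k (j, r) * FreeAlgebra.ι k (i, r))
        (β • (FreeAlgebra.ι k (i, r) * FreeAlgebra.ι k (j, r)))
  | mixed {i j r s : Fin n} (hij : i < j) (hrs : r < s) :
      QRel n α β (FreeAlgebra.ι k (j, r) * FreeAlgebra.ι k (i, s))
        ((α⁻¹ * β) • (FreeAlgebra.ι k (i, s) * FreeAlgebra.ι k (j, r)))
  | diag {i j r s : Fin n} (hij : i < j) (hrs : r < s) :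
      QRel n α β (FreeAlgebra.ι k (j, s) * FreeAlgebra.ι k (i, r))
        (FreeAlgebra.ι k (i, r) * FreeAlgebra.ι k (j, s)
          + (β - α⁻¹) • (FreeAlgebra.ι k (i, s) * FreeAlgebra.ι k (j, r)))

/-- The two-parameter quantum matrix algebra `A_{α,β}(n)`. -/
abbrev QMat (n : ℕ) (α β : k) := RingQuot (QRel k n α β)

/-- The generators `c_{ij}` of `A_{α,β}(n)`. -/
def qc (n : ℕ) (α β : k) (i j : Fin n) : QMat k n α β :=
  RingQuot.mkAlgHom k (QRel k n α β) (FreeAlgebra.ι k (i, j))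

/-- The ordered monomial `c^ω = c₁₁^{ω₁₁} c₁₂^{ω₁₂} ⋯ cₙₙ^{ωₙₙ}`,
with factors taken in lexicographic order of the index `(i,j)`. -/
def qMon (n : ℕ) (α β : k) (ω : Fin n → Fin n → ℕ) : QMat k n α β :=
  ((List.finRange n).map fun i =>
    ((List.finRange n).map fun j => qc k n α β i j ^ ω i j).prod).prod

/-- The relation identifying the generators `c_{is}` with `s > b_i` with `0`
(here in 0-based indexing: `c i s ~ 0` when `b i < s`). -/
def BRel (n : ℕ) (α β : k) (b : Fin n → Fin n) :
    QMat k n α β → QMat k n α β → Prop :=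
  fun x y => (∃ i s : Fin n, b i < s ∧ x = qc k n α β i s) ∧ y = 0

/-- The quotient algebra `A(b) = A_{α,β}(n)/I(b)`. -/
abbrev QB (n : ℕ) (α β : k) (b : Fin n → Fin n) := RingQuot (BRel k n α β b)

/-- The canonical projection `A(n) → A(b)`. -/
def qbProj (n : ℕ) (α β : k) (b : Fin n → Fin n) : QMat k n α β →ₐ[k] QB k n α β b :=
  RingQuot.mkAlgHom k (BRel k n α β b)

/-- The number of inversions (Coxeter length) of a permutation. -/
def invCount {n : ℕ} (σ : Equiv.Perm (Fin n)) : ℕ :=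
  (Finset.univ.filter fun p : Fin n × Fin n => p.1 < p.2 ∧ σ p.2 < σ p.1).card

/-- The two-parameter quantum determinant
`d = Σ_σ (−α)^{−ℓ(σ)} c_{1,σ(1)} ⋯ c_{n,σ(n)}`. -/
def qdet (n : ℕ) (α β : k) : QMat k n α β :=
  ∑ σ : Equiv.Perm (Fin n),
    ((-α)⁻¹ ^ invCount σ) • ((List.finRange n).map fun i => qc k n α β i (σ i)).prod

/- ===== Auxiliary development ===== -/
namespace QdetAux

/-- inversion count of a function -/
def invF {n : ℕ} (a : Fin n → Fin n) : ℕ :=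
  (Finset.univ.filter fun p : Fin n × Fin n => p.1 < p.2 ∧ a p.2 < a p.1).card

section Comb

variable {n : ℕ} {p q : Fin n}

lemma swap_lt (hq : (p : ℕ) + 1 = q) {x y : Fin n} (hxy : x < y) (hne : ¬(x = p ∧ y = q)) :
    Equiv.swap p q x < Equiv.swap p q y := by
  rw [Fin.lt_def] at hxy ⊢
  rw [Equiv.swap_apply_def, Equiv.swap_apply_def]
  split_ifs <;> simp only [Fin.ext_iff, not_and] at * <;> omega

lemma invF_swap (hq : (p : ℕ) + 1 = q) (a : Fin n → Fin n) (h : a p < a q) :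
    invF (a ∘ Equiv.swap p q) = invF a + 1 := by
  classical
  set e := Equiv.swap p q with he
  have hplt : p < q := by rw [Fin.lt_def]; omega
  have hep : e p = q := Equiv.swap_apply_left p q
  have heq : e q = p := Equiv.swap_apply_right p q
  have hee : ∀ x : Fin n, e (e x) = x := fun x => Equiv.swap_apply_self p q x
  set S : (Fin n → Fin n) → Finset (Fin n × Fin n) := fun b =>
    Finset.univ.filter fun pr : Fin n × Fin n => pr.1 < pr.2 ∧ b pr.2 < b pr.1 with hS
  have hmem : (p, q) ∈ S (a ∘ e) := by
    simp only [hS, Finset.mem_filter, Finset.mem_univ, true_and, Function.comp_apply, hep, heq]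
    exact ⟨hplt, h⟩
  have hcard : (S (a ∘ e)).card = ((S (a ∘ e)).erase (p, q)).card + 1 :=
    (Finset.card_erase_add_one hmem).symm
  have hbij : ((S (a ∘ e)).erase (p, q)).card = (S a).card := by
    apply Finset.card_bij' (i := fun pr _ => (e pr.1, e pr.2)) (j := fun pr _ => (e pr.1, e pr.2))
    · intro pr hpr
      rw [Finset.mem_erase] at hpr
      obtain ⟨hne, hpr⟩ := hpr
      simp only [hS, Finset.mem_filter, Finset.mem_univ, true_and, Function.comp_apply] at hpr ⊢
      refine ⟨swap_lt hq hpr.1 ?_, hpr.2⟩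
      intro ⟨h1, h2⟩; exact hne (by rw [Prod.ext_iff]; exact ⟨h1, h2⟩)
    · intro pr hpr
      simp only [hS, Finset.mem_filter, Finset.mem_univ, true_and, Function.comp_apply] at hpr
      rw [Finset.mem_erase]
      have hprne : ¬(pr.1 = p ∧ pr.2 = q) := by
        rintro ⟨h1, h2⟩
        rw [h1, h2] at hpr
        exact absurd h (not_lt.2 hpr.2.le)
      constructor
      · rintro hcontra
        rw [Prod.ext_iff] at hcontra
        obtain ⟨h1, h2⟩ := hcontra
        simp only at h1 h2
        have e1 : pr.1 = q := by
          have := congrArg e h1; rwa [hee, hep] at this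
        have e2 : pr.2 = p := by
          have := congrArg e h2; rwa [hee, heq] at this
        rw [e1, e2] at hpr
        exact absurd hplt (not_lt.2 hpr.1.le)
      · simp only [hS, Finset.mem_filter, Finset.mem_univ, true_and, Function.comp_apply, hee]
        exact ⟨swap_lt hq hpr.1 hprne, hpr.2⟩
    · intro pr _; simp [hee]
    · intro pr _; simp [hee]
  have h0 : invF (a ∘ e) = (S (a ∘ e)).card := rfl
  rw [h0, hcard, hbij]; rfl

lemma invF_id : invF (id : Fin n → Fin n) = 0 := by
  simp only [invF, Finset.card_eq_zero, Finset.filter_eq_empty_iff]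
  rintro pr - ⟨h1, h2⟩
  exact absurd h1 (not_lt.2 h2.le)

lemma finRange_split (hq : (p : ℕ) + 1 = q) :
    List.finRange n = (List.finRange n).take (p : ℕ) ++
      p :: q :: (List.finRange n).drop ((q : ℕ) + 1) := by
  have hp : (p : ℕ) < (List.finRange n).length := by simp
  have hq' : (q : ℕ) < (List.finRange n).length := by simp
  have h1 : (List.finRange n).drop (p : ℕ) = p :: (List.finRange n).drop ((p : ℕ) + 1) := by
    rw [List.drop_eq_getElem_cons hp]
    congr 1
    simp [Fin.ext_iff]
  have h2 : (List.finRange n).drop ((q : ℕ)) = q :: (List.finRange n).drop ((q : ℕ) + 1) := by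
    rw [List.drop_eq_getElem_cons hq']
    congr 1
    simp [Fin.ext_iff]
  conv_lhs => rw [← List.take_append_drop (p : ℕ) (List.finRange n)]
  rw [h1, hq, h2]

lemma mem_take_finRange {m : ℕ} {x : Fin n} (hx : x ∈ (List.finRange n).take m) :
    (x : ℕ) < m := by
  obtain ⟨i, hi, hxi⟩ := List.mem_iff_getElem.1 hx
  rw [List.getElem_take] at hxi
  have him : i < m := by
    have := hi
    simp [List.length_take] at this
    omega
  subst hxi
  simpa using him

lemma mem_drop_finRange {m : ℕ} {x : Fin n} (hx : x ∈ (List.finRange n).drop m) :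
    m ≤ (x : ℕ) := by
  obtain ⟨i, hi, hxi⟩ := List.mem_iff_getElem.1 hx
  rw [List.getElem_drop] at hxi
  subst hxi
  simp

section ProdSplit
variable {M : Type*} [Monoid M]

lemma prod_split (hq : (p : ℕ) + 1 = q) (f : Fin n → M) :
    ((List.finRange n).map f).prod =
      (((List.finRange n).take (p : ℕ)).map f).prod * (f p * f q) *
        (((List.finRange n).drop ((q : ℕ) + 1)).map f).prod := by
  conv_lhs => rw [finRange_split hq]
  rw [List.map_append, List.prod_append, List.map_cons, List.map_cons, List.prod_cons,
    List.prod_cons]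
  rw [mul_assoc, mul_assoc]

omit [Monoid M] in
lemma take_map_congr (hq : (p : ℕ) + 1 = q) (f g : Fin n → M)
    (hfg : ∀ x, x ≠ p → x ≠ q → f x = g x) :
    ((List.finRange n).take (p : ℕ)).map f = ((List.finRange n).take (p : ℕ)).map g := by
  apply List.map_congr_left
  intro x hx
  have := mem_take_finRange hx
  exact hfg x (fun h => by subst h; omega) (fun h => by subst h; omega)

omit [Monoid M] in
lemma drop_map_congr (hq : (p : ℕ) + 1 = q) (f g : Fin n → M)
    (hfg : ∀ x, x ≠ p → x ≠ q → f x = g x) :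
    ((List.finRange n).drop ((q : ℕ) + 1)).map f =
      ((List.finRange n).drop ((q : ℕ) + 1)).map g := by
  apply List.map_congr_left
  intro x hx
  have := mem_drop_finRange hx
  exact hfg x (fun h => by subst h; omega) (fun h => by subst h; omega)

end ProdSplit

/-- Expanding a product of sums (noncommutative). -/
lemma prod_sum_expand {M : Type*} [Semiring M] {J : Type*} [Fintype J] [DecidableEq J] :
    ∀ (N : ℕ) (g : Fin N → J → M),
      ((List.finRange N).map fun i => ∑ m : J, g i m).prod
        = ∑ f : Fin N → J, ((List.finRange N).map fun i => g i (f i)).prod := by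
  intro N
  induction N with
  | zero =>
    intro g
    haveI : Unique (Fin 0 → J) := ⟨⟨fun x => x.elim0⟩, fun f => funext fun x => x.elim0⟩
    rw [Fintype.sum_unique]
    simp
  | succ N ihN =>
    intro g
    rw [List.finRange_succ, List.map_cons, List.prod_cons, List.map_map]
    have hre : ((List.finRange N).map ((fun i => ∑ m : J, g i m) ∘ Fin.succ))
        = ((List.finRange N).map fun i => ∑ m : J, g i.succ m) := rfl
    rw [hre, ihN (fun i m => g i.succ m), Finset.sum_mul_sum]
    have hpt := Fintype.sum_prod_type (f := fun x : J × (Fin N → J) =>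
      g 0 x.1 * (List.map (fun i => g i.succ (x.2 i)) (List.finRange N)).prod)
    rw [← hpt]
    apply Fintype.sum_equiv (Fin.consEquiv fun _ => J)
    intro x
    rw [List.map_cons, List.prod_cons, List.map_map]
    congr 1

end Comb

end QdetAux

namespace QdetAux
section Alg

variable {k} {n : ℕ} (α β : k)

lemma qc_row (i : Fin n) {r s : Fin n} (h : r < s) :
    qc k n α β i s * qc k n α β i r = α • (qc k n α β i r * qc k n α β i s) := by
  have h2 := RingQuot.mkAlgHom_rel k (s := QRel k n α β) (QRel.row i h)
  simpa only [map_mul, map_smul, qc] using h2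

lemma qc_mixed {i j r s : Fin n} (hij : i < j) (hrs : r < s) :
    qc k n α β j r * qc k n α β i s =
      (α⁻¹ * β) • (qc k n α β i s * qc k n α β j r) := by
  have h2 := RingQuot.mkAlgHom_rel k (s := QRel k n α β) (QRel.mixed hij hrs)
  simpa only [map_mul, map_smul, qc] using h2

lemma qc_diag {i j r s : Fin n} (hij : i < j) (hrs : r < s) :
    qc k n α β j s * qc k n α β i r =
      qc k n α β i r * qc k n α β j s
        + (β - α⁻¹) • (qc k n α β i s * qc k n α β j r) := by
  have h2 := RingQuot.mkAlgHom_rel k (s := QRel k n α β) (QRel.diag hij hrs)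
  simpa only [map_mul, map_smul, map_add, qc] using h2

/-- The row monomial with row indices `a` and column indices `σ`. -/
def Pm (a : Fin n → Fin n) (σ : Equiv.Perm (Fin n)) : QMat k n α β :=
  ((List.finRange n).map fun i => qc k n α β (a i) (σ i)).prod

/-- The "determinant with rows `a`". -/
def Dt (a : Fin n → Fin n) : QMat k n α β :=
  ∑ σ : Equiv.Perm (Fin n), ((-α)⁻¹ ^ invF ⇑σ) • Pm α β a σ

lemma Dt_id : Dt α β (id : Fin n → Fin n) = qdet k n α β := rfl

lemma bracket_row (hα : α ≠ 0) (u : Fin n) {r s : Fin n} (h : r < s) :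
    qc k n α β u r * qc k n α β u s + (-α)⁻¹ • (qc k n α β u s * qc k n α β u r) = 0 := by
  rw [qc_row α β u h, smul_smul, inv_neg, neg_mul, inv_mul_cancel₀ hα, neg_smul, one_smul,
    add_neg_cancel]

lemma bracket_desc (hα : α ≠ 0) {i j r s : Fin n} (hij : i < j) (hrs : r < s) :
    qc k n α β j r * qc k n α β i s + (-α)⁻¹ • (qc k n α β j s * qc k n α β i r) =
      (-α)⁻¹ • (qc k n α β i r * qc k n α β j s
        + (-α)⁻¹ • (qc k n α β i s * qc k n α β j r)) := by
  rw [qc_mixed α β hij hrs, qc_diag α β hij hrs]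
  match_scalars
  all_goals field_simp
  all_goals ring

variable {p q : Fin n}

lemma Dt_pairing (hq : (p : ℕ) + 1 = q) (a : Fin n → Fin n) :
    Dt α β a = ∑ σ ∈ Finset.univ.filter (fun σ : Equiv.Perm (Fin n) => σ p < σ q),
      ((-α)⁻¹ ^ invF ⇑σ) •
        (Pm α β a σ + (-α)⁻¹ • Pm α β a (σ * Equiv.swap p q)) := by
  classical
  have hpqne : p ≠ q := by
    intro h; have := congrArg Fin.val h; omega
  rw [Dt, ← Finset.sum_filter_add_sum_filter_not Finset.univ
    (fun σ : Equiv.Perm (Fin n) => σ p < σ q)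
    (fun σ => ((-α)⁻¹ ^ invF ⇑σ) • Pm α β a σ)]
  have key : ∑ σ ∈ Finset.univ.filter (fun σ : Equiv.Perm (Fin n) => ¬ σ p < σ q),
      ((-α)⁻¹ ^ invF ⇑σ) • Pm α β a σ
      = ∑ σ ∈ Finset.univ.filter (fun σ : Equiv.Perm (Fin n) => σ p < σ q),
        ((-α)⁻¹ ^ (invF ⇑σ + 1)) • Pm α β a (σ * Equiv.swap p q) := by
    apply Finset.sum_nbij' (i := fun σ => σ * Equiv.swap p q) (j := fun σ => σ * Equiv.swap p q)
    · intro σ hσ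
      simp only [Finset.mem_filter, Finset.mem_univ, true_and, not_lt] at hσ ⊢
      rw [Equiv.Perm.mul_apply, Equiv.Perm.mul_apply, Equiv.swap_apply_left,
        Equiv.swap_apply_right]
      exact lt_of_le_of_ne hσ (fun h => hpqne (σ.injective h).symm)
    · intro σ hσ
      simp only [Finset.mem_filter, Finset.mem_univ, true_and, not_lt] at hσ ⊢
      rw [Equiv.Perm.mul_apply, Equiv.Perm.mul_apply, Equiv.swap_apply_left,
        Equiv.swap_apply_right]
      exact hσ.le
    · intro σ _; rw [mul_assoc, Equiv.swap_mul_self, mul_one]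
    · intro σ _; rw [mul_assoc, Equiv.swap_mul_self, mul_one]
    · intro σ hσ
      simp only [Finset.mem_filter, Finset.mem_univ, true_and, not_lt] at hσ
      have hlt : (σ * Equiv.swap p q) p < (σ * Equiv.swap p q) q := by
        rw [Equiv.Perm.mul_apply, Equiv.Perm.mul_apply, Equiv.swap_apply_left,
          Equiv.swap_apply_right]
        exact lt_of_le_of_ne hσ (fun h => hpqne (σ.injective h).symm)
      have hl := invF_swap hq (⇑(σ * Equiv.swap p q)) hlt
      have hcomp : (⇑(σ * Equiv.swap p q)) ∘ (Equiv.swap p q) = ⇑σ := by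
        funext x
        simp [Equiv.Perm.mul_apply, Equiv.swap_apply_self]
      rw [hcomp] at hl
      rw [mul_assoc, Equiv.swap_mul_self, mul_one, hl]
  rw [key, ← Finset.sum_add_distrib]
  apply Finset.sum_congr rfl
  intro σ _
  rw [pow_succ, mul_smul, smul_add]

lemma pair_split (hq : (p : ℕ) + 1 = q) (a : Fin n → Fin n) (σ : Equiv.Perm (Fin n)) :
    Pm α β a σ + (-α)⁻¹ • Pm α β a (σ * Equiv.swap p q) =
      (((List.finRange n).take (p : ℕ)).map fun i => qc k n α β (a i) (σ i)).prod *
        (qc k n α β (a p) (σ p) * qc k n α β (a q) (σ q)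
          + (-α)⁻¹ • (qc k n α β (a p) (σ q) * qc k n α β (a q) (σ p))) *
      (((List.finRange n).drop ((q : ℕ) + 1)).map fun i => qc k n α β (a i) (σ i)).prod := by
  have h1 := prod_split (hq := hq) (f := fun i => qc k n α β (a i) (σ i))
  have h2 := prod_split (hq := hq) (f := fun i => qc k n α β (a i) ((σ * Equiv.swap p q) i))
  have hcong : ∀ x, x ≠ p → x ≠ q →
      qc k n α β (a x) ((σ * Equiv.swap p q) x) = qc k n α β (a x) (σ x) := by
    intro x hxp hxq
    rw [Equiv.Perm.mul_apply, Equiv.swap_apply_of_ne_of_ne hxp hxq]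
  rw [Pm, Pm, h1, h2, take_map_congr hq _ _ hcong, drop_map_congr hq _ _ hcong]
  rw [Equiv.Perm.mul_apply, Equiv.Perm.mul_apply, Equiv.swap_apply_left, Equiv.swap_apply_right]
  simp only [mul_add, add_mul, smul_mul_assoc, mul_smul_comm]

lemma Dt_adj_eq (hα : α ≠ 0) (hq : (p : ℕ) + 1 = q) (a : Fin n → Fin n) (hpq : a p = a q) :
    Dt α β a = 0 := by
  rw [Dt_pairing α β hq a]
  apply Finset.sum_eq_zero
  intro σ hσ
  rw [Finset.mem_filter] at hσ
  rw [pair_split α β hq a σ, hpq, bracket_row α β hα (a q) hσ.2, mul_zero, zero_mul, smul_zero]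

lemma Dt_adj_desc (hα : α ≠ 0) (hq : (p : ℕ) + 1 = q) (a : Fin n → Fin n) (hd : a q < a p) :
    Dt α β a = (-α)⁻¹ • Dt α β (a ∘ Equiv.swap p q) := by
  rw [Dt_pairing α β hq a, Dt_pairing α β hq (a ∘ Equiv.swap p q), Finset.smul_sum]
  apply Finset.sum_congr rfl
  intro σ hσ
  rw [Finset.mem_filter] at hσ
  have hlt : σ p < σ q := hσ.2
  rw [pair_split α β hq a σ, pair_split α β hq (a ∘ Equiv.swap p q) σ]
  have hcong : ∀ x, x ≠ p → x ≠ q →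
      qc k n α β ((a ∘ Equiv.swap p q) x) (σ x) = qc k n α β (a x) (σ x) := by
    intro x hxp hxq
    rw [Function.comp_apply, Equiv.swap_apply_of_ne_of_ne hxp hxq]
  rw [take_map_congr hq _ _ hcong, drop_map_congr hq _ _ hcong]
  have e1 : (a ∘ Equiv.swap p q) p = a q := by
    rw [Function.comp_apply, Equiv.swap_apply_left]
  have e2 : (a ∘ Equiv.swap p q) q = a p := by
    rw [Function.comp_apply, Equiv.swap_apply_right]
  rw [e1, e2, bracket_desc α β hα hd hlt, mul_smul_comm, smul_mul_assoc, smul_comm]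

/-- Main lemma: the row-permuted quantum determinant. -/
lemma Dt_eq (hα : α ≠ 0) (a : Fin n → Fin n) :
    Dt α β a = if Function.Injective a then ((-α)⁻¹ ^ invF a) • qdet k n α β else 0 := by
  classical
  suffices H : ∀ (N : ℕ) (a : Fin n → Fin n), invF a = N →
      Dt α β a = if Function.Injective a then ((-α)⁻¹ ^ invF a) • qdet k n α β else 0 from
    H _ a rfl
  intro N
  induction N using Nat.strong_induction_on with
  | _ N ih =>
  intro a hN
  by_cases hx : ∃ (x : Fin n) (hx1 : (x : ℕ) + 1 < n), ¬ a x < a ⟨(x : ℕ) + 1, hx1⟩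
  · obtain ⟨x, hx1, hlt⟩ := hx
    set p : Fin n := x with hpdef
    set q : Fin n := ⟨(x : ℕ) + 1, hx1⟩ with hqdef
    have hq : (p : ℕ) + 1 = q := rfl
    have hpqne : p ≠ q := by
      intro h; have := congrArg Fin.val h; rw [hqdef] at this; simp [hpdef] at this
    rcases eq_or_lt_of_le (not_lt.1 hlt) with heq | hdesc
    · rw [Dt_adj_eq α β hα hq a heq.symm, if_neg]
      intro hinj
      exact hpqne (hinj heq.symm)
    · have hrec := Dt_adj_desc α β hα hq a hdesc
      have hswap : (a ∘ Equiv.swap p q) ∘ (Equiv.swap p q) = a := by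
        funext y; simp [Equiv.swap_apply_self]
      have h2 : (a ∘ Equiv.swap p q) p < (a ∘ Equiv.swap p q) q := by
        simpa [Equiv.swap_apply_left, Equiv.swap_apply_right] using hdesc
      have hinvF : invF a = invF (a ∘ Equiv.swap p q) + 1 := by
        have := invF_swap hq (a ∘ Equiv.swap p q) h2
        rwa [hswap] at this
      have hlt' : invF (a ∘ Equiv.swap p q) < N := by omega
      have hIH := ih _ hlt' (a ∘ Equiv.swap p q) rfl
      have hinj : Function.Injective (a ∘ Equiv.swap p q) ↔ Function.Injective a := by
        constructor
        · intro h
          rw [← hswap]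
          exact h.comp (Equiv.injective _)
        · intro h
          exact h.comp (Equiv.injective _)
      by_cases hinja : Function.Injective a
      · rw [hrec, hIH, if_pos (hinj.2 hinja), if_pos hinja, smul_smul, ← pow_succ', ← hinvF]
      · rw [hrec, hIH, if_neg (fun hc => hinja (hinj.1 hc)), if_neg hinja, smul_zero]
  · push_neg at hx
    have ha : a = id := by
      cases n with
      | zero => funext y; exact absurd y.isLt (by omega)
      | succ m =>
        have hsm : StrictMono a := by
          rw [Fin.strictMono_iff_lt_succ]
          intro i
          have h1 : ((i.castSucc : Fin (m + 1)) : ℕ) + 1 < m + 1 := by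
            simp only [Fin.coe_castSucc]
            omega
          have h2 : (⟨((i.castSucc : Fin (m + 1)) : ℕ) + 1, h1⟩ : Fin (m + 1)) = i.succ := by
            apply Fin.ext; simp
          rw [← h2]
          exact hx _ h1
        have hsurj : Function.Surjective a :=
          Finite.injective_iff_surjective.1 hsm.injective
        exact (StrictMono.range_inj hsm strictMono_id).1 (by rw [hsurj.range_eq, Set.range_id])
    subst ha
    rw [if_pos Function.injective_id, invF_id, pow_zero, one_smul, Dt_id]

end Alg
end QdetAux

namespace QdetAux
section Tensor

variable {k : Type} [Field k] {A B : Type*} [Semiring A] [Semiring B] [Algebra k A] [Algebra k B]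

lemma prod_tmul {ι : Type*} (l : List ι) (x : ι → A) (y : ι → B) :
    (l.map fun i => x i ⊗ₜ[k] y i).prod = (l.map x).prod ⊗ₜ[k] (l.map y).prod := by
  induction l with
  | nil => simp [Algebra.TensorProduct.one_def]
  | cons a l ihl =>
    simp only [List.map_cons, List.prod_cons, ihl, Algebra.TensorProduct.tmul_mul_tmul]

end Tensor
end QdetAux

/-- The quantum determinant is group-like: `Δ(d) = d ⊗ d` and `ε(d) = 1`. -/
theorem qdet_grouplike (n : ℕ) (α β : k) (hα : α ≠ 0) (hβ : β ≠ 0)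
    (Δ : QMat k n α β →ₐ[k] QMat k n α β ⊗[k] QMat k n α β)
    (hΔ : ∀ i j : Fin n, Δ (qc k n α β i j) =
      ∑ m : Fin n, qc k n α β i m ⊗ₜ[k] qc k n α β m j)
    (ε : QMat k n α β →ₐ[k] k)
    (hε : ∀ i j : Fin n, ε (qc k n α β i j) = if i = j then 1 else 0) :
    Δ (qdet k n α β) = qdet k n α β ⊗ₜ[k] qdet k n α β ∧ ε (qdet k n α β) = 1 := by
  classical
  open QdetAux in
  have hinvC : ∀ σ : Equiv.Perm (Fin n), invCount σ = invF ⇑σ := fun _ => rfl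
  constructor
  · -- Δ(d) = d ⊗ d
    rw [qdet, map_sum]
    have hMon : ∀ σ : Equiv.Perm (Fin n),
        Δ (((List.finRange n).map fun i => qc k n α β i (σ i)).prod)
          = ∑ f : Fin n → Fin n,
              (((List.finRange n).map fun i => qc k n α β i (f i)).prod ⊗ₜ[k]
                QdetAux.Pm α β f σ) := by
      intro σ
      rw [map_list_prod, List.map_map]
      have hmc : (List.finRange n).map (⇑Δ ∘ fun i => qc k n α β i (σ i))
          = (List.finRange n).map fun i =>
              ∑ m : Fin n, (qc k n α β i m ⊗ₜ[k] qc k n α β m (σ i)) := by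
        apply List.map_congr_left
        intro i _
        exact hΔ i (σ i)
      rw [hmc, QdetAux.prod_sum_expand n (fun i m => qc k n α β i m ⊗ₜ[k] qc k n α β m (σ i))]
      apply Finset.sum_congr rfl
      intro f _
      rw [QdetAux.prod_tmul]
      rfl
    calc ∑ σ : Equiv.Perm (Fin n),
          Δ (((-α)⁻¹ ^ invCount σ) • ((List.finRange n).map fun i => qc k n α β i (σ i)).prod)
        = ∑ σ : Equiv.Perm (Fin n), ∑ f : Fin n → Fin n,
            (((-α)⁻¹ ^ invF ⇑σ) •
              (((List.finRange n).map fun i => qc k n α β i (f i)).prod ⊗ₜ[k]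
                QdetAux.Pm α β f σ)) := by
          apply Finset.sum_congr rfl
          intro σ _
          rw [map_smul, hMon σ, Finset.smul_sum, hinvC σ]
      _ = ∑ f : Fin n → Fin n,
            (((List.finRange n).map fun i => qc k n α β i (f i)).prod ⊗ₜ[k]
              QdetAux.Dt α β f) := by
          rw [Finset.sum_comm]
          apply Finset.sum_congr rfl
          intro f _
          rw [QdetAux.Dt, TensorProduct.tmul_sum]
          apply Finset.sum_congr rfl
          intro σ _
          rw [TensorProduct.tmul_smul]
      _ = ∑ f : Fin n → Fin n,
            (if Function.Injective f then
              ((((-α)⁻¹ ^ QdetAux.invF f) •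
                ((List.finRange n).map fun i => qc k n α β i (f i)).prod) ⊗ₜ[k]
                  qdet k n α β)
            else 0) := by
          apply Finset.sum_congr rfl
          intro f _
          rw [QdetAux.Dt_eq α β hα f]
          by_cases hf : Function.Injective f
          · rw [if_pos hf, if_pos hf, TensorProduct.tmul_smul, TensorProduct.smul_tmul']
          · rw [if_neg hf, if_neg hf, TensorProduct.tmul_zero]
      _ = ∑ σ : Equiv.Perm (Fin n),
            ((((-α)⁻¹ ^ invCount σ) •
              ((List.finRange n).map fun i => qc k n α β i (σ i)).prod) ⊗ₜ[k]
                qdet k n α β) := by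
          rw [← Finset.sum_filter]
          exact (Finset.sum_bij
            (i := fun (σ : Equiv.Perm (Fin n)) (_ : σ ∈ Finset.univ) =>
              (⇑σ : Fin n → Fin n))
            (hi := fun σ _ => by
              simp only [Finset.mem_filter, Finset.mem_univ, true_and]
              exact σ.injective)
            (i_inj := fun σ1 _ σ2 _ h => Equiv.coe_fn_injective h)
            (i_surj := fun f hf => by
              simp only [Finset.mem_filter, Finset.mem_univ, true_and] at hf
              exact ⟨Equiv.ofBijective f (Finite.injective_iff_bijective.1 hf),
                Finset.mem_univ _, rfl⟩)
            (h := fun σ _ => rfl)).symm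
      _ = qdet k n α β ⊗ₜ[k] qdet k n α β := by
          rw [qdet, TensorProduct.sum_tmul]
  · -- ε(d) = 1
    rw [qdet, map_sum]
    have hterm : ∀ σ : Equiv.Perm (Fin n),
        ε (((-α)⁻¹ ^ invCount σ) • ((List.finRange n).map fun i => qc k n α β i (σ i)).prod)
          = ((-α)⁻¹ ^ invCount σ) * (if σ = 1 then 1 else 0) := by
      intro σ
      rw [map_smul, smul_eq_mul]
      congr 1
      rw [map_list_prod, List.map_map]
      by_cases hσ : σ = 1
      · subst hσ
        rw [if_pos rfl]
        apply List.prod_eq_one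
        intro x hx
        simp only [List.mem_map] at hx
        obtain ⟨i, _, rfl⟩ := hx
        simp [Function.comp, hε]
      · rw [if_neg hσ]
        obtain ⟨i, hi⟩ : ∃ i, σ i ≠ i := by
          by_contra hcon
          push_neg at hcon
          exact hσ (Equiv.ext hcon)
        apply List.prod_eq_zero
        simp only [List.mem_map]
        refine ⟨i, List.mem_finRange i, ?_⟩
        simp only [Function.comp_apply, hε]
        rw [if_neg (fun h => hi h.symm)]
    rw [Finset.sum_congr rfl (fun σ _ => hterm σ)]
    rw [Finset.sum_eq_single (1 : Equiv.Perm (Fin n))]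
    · rw [if_pos rfl, mul_one, hinvC 1]
      have h1 : invF (⇑(1 : Equiv.Perm (Fin n))) = invF (id : Fin n → Fin n) := rfl
      rw [h1, QdetAux.invF_id, pow_zero]
    · intro σ _ hσ
      rw [if_neg hσ, mul_zero]
    · intro h
      exact absurd (Finset.mem_univ _) h
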